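/- For every n ≥ 1, R_n(1/2/3) equals the set of restricted growth functions of length n all of whose letters are 1 or 2. -/

import Mathlib

open Finset

/-- `IsRGF w` : `w = a₁⋯aₙ` is a restricted growth function: all letters are
positive, the first letter is `1` and each later letter is at most one more
than the maximum of the preceding prefix. -/
def IsRGF (w : List ℕ) : Prop :=
  (∀ a ∈ w, 1 ≤ a) ∧
  (0 < w.length → w.getD 0 0 = 1) ∧
  (∀ j : ℕ, j + 1 < w.length →
    w.getD (j + 1) 0 ≤ 1 + (w.take (j + 1)).foldr max 0)

/-- The set partition encoded by the word `w` contains the set-partition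
pattern encoded by the word `p`:  there are positions, listed increasingly,
whose "same block" (= same letter) pattern in `w` is exactly that of `p`. -/
def ContainsPat (w p : List ℕ) : Prop :=
  ∃ f : Fin p.length → Fin w.length, StrictMono f ∧
    ∀ a b : Fin p.length, (w.get (f a) = w.get (f b) ↔ p.get a = p.get b)

/-- `Rn n p` : the restricted growth functions of length `n` whose associated
set partition avoids the pattern (of set partitions) encoded by the RGF `p`.
Via the standard bijection `σ ↦ w(σ)` this is `R_n(π) ≅ Π_n(π)`.
Patterns of `[3]`:  `1/2/3 ↦ [1,2,3]`, `1/23 ↦ [1,2,2]`, `13/2 ↦ [1,2,1]`,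
`12/3 ↦ [1,1,2]`, `123 ↦ [1,1,1]`. -/
def Rn (n : ℕ) (p : List ℕ) : Set (List ℕ) :=
  {w | w.length = n ∧ IsRGF w ∧ ¬ ContainsPat w p}

/-- `lb` : sum over positions `j` of the number of distinct values occurring
before position `j` that are bigger than the letter at `j`. -/
def statLB (w : List ℕ) : ℕ :=
  ∑ j ∈ Finset.range w.length,
    ((w.take j).toFinset.filter (fun v => w.getD j 0 < v)).card

/-- `ls` : left and smaller. -/
def statLS (w : List ℕ) : ℕ :=
  ∑ j ∈ Finset.range w.length,
    ((w.take j).toFinset.filter (fun v => v < w.getD j 0)).card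

/-- `rb` : right and bigger. -/
def statRB (w : List ℕ) : ℕ :=
  ∑ j ∈ Finset.range w.length,
    ((w.drop (j + 1)).toFinset.filter (fun v => w.getD j 0 < v)).card

/-- `rs` : right and smaller. -/
def statRS (w : List ℕ) : ℕ :=
  ∑ j ∈ Finset.range w.length,
    ((w.drop (j + 1)).toFinset.filter (fun v => v < w.getD j 0)).card

/-- The four–variable generating function
`F_n(π;q,r,s,t) = ∑_{σ∈Π_n(π)} q^{lb} r^{ls} s^{rb} t^{rs}`, with
`q = X 0`, `r = X 1`, `s = X 2`, `t = X 3`. -/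
noncomputable def Fgen (n : ℕ) (p : List ℕ) : MvPolynomial (Fin 4) ℤ :=
  ∑ᶠ w ∈ Rn n p,
    (MvPolynomial.X 0 : MvPolynomial (Fin 4) ℤ) ^ statLB w *
      MvPolynomial.X 1 ^ statLS w *
      MvPolynomial.X 2 ^ statRB w *
      MvPolynomial.X 3 ^ statRS w

/-- `LB_n(π;q)`. -/
noncomputable def LBp (n : ℕ) (p : List ℕ) : Polynomial ℤ :=
  ∑ᶠ w ∈ Rn n p, Polynomial.X ^ statLB w

/-- `LS_n(π;q)`. -/
noncomputable def LSp (n : ℕ) (p : List ℕ) : Polynomial ℤ :=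
  ∑ᶠ w ∈ Rn n p, Polynomial.X ^ statLS w

/-- `RB_n(π;q)`. -/
noncomputable def RBp (n : ℕ) (p : List ℕ) : Polynomial ℤ :=
  ∑ᶠ w ∈ Rn n p, Polynomial.X ^ statRB w

/-- `RS_n(π;q)`. -/
noncomputable def RSp (n : ℕ) (p : List ℕ) : Polynomial ℤ :=
  ∑ᶠ w ∈ Rn n p, Polynomial.X ^ statRS w

section helpers

lemma foldr_max_mem (l : List ℕ) (h : 0 < l.foldr max 0) : l.foldr max 0 ∈ l := by
  induction l with
  | nil => simp at h
  | cons a t ih =>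
    simp only [List.foldr_cons] at h ⊢
    rcases le_total (t.foldr max 0) a with hle | hle
    · rw [max_eq_left hle]; exact List.mem_cons_self
    · rw [max_eq_right hle] at h ⊢; exact List.mem_cons_of_mem _ (ih h)

lemma rgf_hits (w : List ℕ) (hw : IsRGF w) :
    ∀ j, ∀ hj : j < w.length, ∀ m, 1 ≤ m → m ≤ w[j] →
      ∃ i, ∃ hi : i < w.length, i ≤ j ∧ w[i] = m := by
  intro j
  induction j using Nat.strong_induction_on with
  | _ j ih =>
    intro hj m hm1 hm2
    by_cases heq : w[j] = m
    · exact ⟨j, hj, le_refl _, heq⟩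
    have hlt : m < w[j] := lt_of_le_of_ne hm2 (fun h => heq h.symm)
    match j, hj, hlt, heq, ih with
    | 0, hj, hlt, heq, ih =>
      have h0 : w.getD 0 0 = 1 := hw.2.1 (by omega)
      rw [List.getD_eq_getElem w 0 hj] at h0
      omega
    | j'+1, hj, hlt, heq, ih =>
      have hb := hw.2.2 j' hj
      rw [List.getD_eq_getElem w 0 hj] at hb
      have hmax : m ≤ (w.take (j'+1)).foldr max 0 := by omega
      have hpos : 0 < (w.take (j'+1)).foldr max 0 := lt_of_lt_of_le hm1 hmax
      obtain ⟨i, hi, hival⟩ := List.getElem_of_mem (foldr_max_mem _ hpos)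
      have hilen : i < w.length := lt_of_lt_of_le hi (by simp [List.length_take])
      have hij : i < j' + 1 := lt_of_lt_of_le hi (by simp [List.length_take])
      rw [List.getElem_take] at hival
      obtain ⟨i', hi'len, hi'le, hi'val⟩ := ih i hij hilen m hm1 (by omega)
      exact ⟨i', hi'len, by omega, hi'val⟩

end helpers

/-- For every `n ≥ 1`, `R_n(1/2/3)` equals the set of RGFs of
length `n` all of whose letters are `1` or `2`. -/
theorem stmt0 (n : ℕ) (hn : 1 ≤ n) :
    Rn n [1, 2, 3] =
      {w : List ℕ | w.length = n ∧ IsRGF w ∧ ∀ a ∈ w, a = 1 ∨ a = 2} := by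
  ext w
  simp only [Rn, Set.mem_setOf_eq]
  constructor
  · rintro ⟨hlen, hrgf, havoid⟩
    refine ⟨hlen, hrgf, ?_⟩
    by_contra hcon
    push_neg at hcon
    obtain ⟨a, haw, ha1, ha2⟩ := hcon
    have ha3 : 3 ≤ a := by have := hrgf.1 a haw; omega
    obtain ⟨k, hk, hak⟩ := List.getElem_of_mem haw
    obtain ⟨j, hjlen, hjk, hj2⟩ := rgf_hits w hrgf k hk 2 (by omega) (by omega)
    have h0len : 0 < w.length := by omega
    have hw0 : w[0] = 1 := by
      have h0 := hrgf.2.1 h0len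
      rwa [List.getD_eq_getElem w 0 h0len] at h0
    have hj0 : 0 < j := by
      rcases Nat.eq_zero_or_pos j with h | h
      · subst h; omega
      · exact h
    have hjk' : j < k := by
      rcases lt_or_eq_of_le hjk with h | h
      · exact h
      · subst h; omega
    apply havoid
    refine ⟨![⟨0, h0len⟩, ⟨j, hjlen⟩, ⟨k, hk⟩], ?_, ?_⟩
    · intro x y hxy
      fin_cases x <;> fin_cases y <;>
        simp_all [Fin.lt_def, Matrix.cons_val_zero, Matrix.cons_val_one] <;> omega
    · intro x y
      fin_cases x <;> fin_cases y <;>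
        simp_all [List.get_eq_getElem, Matrix.cons_val_zero, Matrix.cons_val_one] <;> omega
  · rintro ⟨hlen, hrgf, h12⟩
    refine ⟨hlen, hrgf, ?_⟩
    rintro ⟨f, hmono, hpat⟩
    let i0 : Fin ([1,2,3] : List ℕ).length := ⟨0, by decide⟩
    let i1 : Fin ([1,2,3] : List ℕ).length := ⟨1, by decide⟩
    let i2 : Fin ([1,2,3] : List ℕ).length := ⟨2, by decide⟩
    have hv0 : w.get (f i0) = 1 ∨ w.get (f i0) = 2 := h12 _ (w.get_mem _)
    have hv1 : w.get (f i1) = 1 ∨ w.get (f i1) = 2 := h12 _ (w.get_mem _)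
    have hv2 : w.get (f i2) = 1 ∨ w.get (f i2) = 2 := h12 _ (w.get_mem _)
    have h01 : w.get (f i0) ≠ w.get (f i1) := fun hh =>
      absurd ((hpat i0 i1).mp hh) (by decide)
    have h02 : w.get (f i0) ≠ w.get (f i2) := fun hh =>
      absurd ((hpat i0 i2).mp hh) (by decide)
    have h12' : w.get (f i1) ≠ w.get (f i2) := fun hh =>
      absurd ((hpat i1 i2).mp hh) (by decide)
    rcases hv0 with h | h <;> rcases hv1 with h' | h' <;> rcases hv2 with h'' | h'' <;> omega
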